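/- Let x₂, x₃, x₄, z₄, z₅, z₆ : ℝ → ℂ be differentiable functions satisfying system S₁: x₂' = x₃, x₃' = x₄, x₄' = 4(3x₂x₃ + z₅), z₄' = z₅, z₅' = z₆, z₆' = 4(2x₂z₅ + x₃z₄). Then the functions a(t) = λ̂₄(x₂,x₃,x₄,z₄,z₅,z₆)(t) and b(t) = λ̂₆(x₂,x₃,x₄,z₄,z₅,z₆)(t) are constant, and the function U = 2x₂ satisfies the fourth-order equation U'''' = 10UU'' + 5(U')² − 10U³ − 8aU + 16b. -/

import Mathlib

/-- If `x₂,x₃,x₄,z₄,z₅,z₆ : ℝ → ℂ` are differentiable and satisfy system `S₁`, then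
`a = λ̂₄(x₂,…,z₆)` and `b = λ̂₆(x₂,…,z₆)` are constant along trajectories, and
`U = 2x₂` satisfies `U'''' = 10UU'' + 5(U')² − 10U³ − 8aU + 16b`. -/
theorem fourth_order_equation_from_S1 (x2 x3 x4 z4 z5 z6 : ℝ → ℂ)
    (hx2 : Differentiable ℝ x2) (hx3 : Differentiable ℝ x3) (hx4 : Differentiable ℝ x4)
    (hz4 : Differentiable ℝ z4) (hz5 : Differentiable ℝ z5) (hz6 : Differentiable ℝ z6)
    (h1 : ∀ t, deriv x2 t = x3 t) (h2 : ∀ t, deriv x3 t = x4 t)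
    (h3 : ∀ t, deriv x4 t = 4 * (3 * x2 t * x3 t + z5 t))
    (h4 : ∀ t, deriv z4 t = z5 t) (h5 : ∀ t, deriv z5 t = z6 t)
    (h6 : ∀ t, deriv z6 t = 4 * (2 * x2 t * z5 t + x3 t * z4 t))
    (a b U : ℝ → ℂ)
    (ha : a = fun t => 1/2 * (x4 t - 6 * x2 t ^ 2 - 4 * z4 t))
    (hb : b = fun t => -(1/4) * (2 * x2 t * (x4 t + 4 * z4 t) - 8 * x2 t ^ 3
      - x3 t ^ 2 - 2 * z6 t))
    (hU : U = fun t => 2 * x2 t) :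
    (∀ s t, a s = a t) ∧ (∀ s t, b s = b t) ∧
    (∀ t, iteratedDeriv 4 U t = 10 * U t * iteratedDeriv 2 U t + 5 * (deriv U t) ^ 2
      - 10 * (U t) ^ 3 - 8 * a t * U t + 16 * b t) := by
  have hx2t : ∀ t, HasDerivAt x2 (x3 t) t := fun t => h1 t ▸ (hx2 t).hasDerivAt
  have hx3t : ∀ t, HasDerivAt x3 (x4 t) t := fun t => h2 t ▸ (hx3 t).hasDerivAt
  have hx4t : ∀ t, HasDerivAt x4 (4 * (3 * x2 t * x3 t + z5 t)) t :=
    fun t => h3 t ▸ (hx4 t).hasDerivAt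
  have hz4t : ∀ t, HasDerivAt z4 (z5 t) t := fun t => h4 t ▸ (hz4 t).hasDerivAt
  have hz5t : ∀ t, HasDerivAt z5 (z6 t) t := fun t => h5 t ▸ (hz5 t).hasDerivAt
  have hz6t : ∀ t, HasDerivAt z6 (4 * (2 * x2 t * z5 t + x3 t * z4 t)) t :=
    fun t => h6 t ▸ (hz6 t).hasDerivAt
  have hsq : ∀ t, HasDerivAt (fun t => x2 t ^ 2) (2 * x2 t * x3 t) t := by
    intro t
    have h := (hx2t t).mul (hx2t t)
    have e : (fun t => x2 t ^ 2) = fun t => x2 t * x2 t := by funext s; ring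
    rw [e, show 2 * x2 t * x3 t = x3 t * x2 t + x2 t * x3 t by ring]; exact h
  have hcube : ∀ t, HasDerivAt (fun t => x2 t ^ 3) (3 * x2 t ^ 2 * x3 t) t := by
    intro t
    have h := ((hx2t t).mul (hx2t t)).mul (hx2t t)
    have e : (fun t => x2 t ^ 3) = fun t => x2 t * x2 t * x2 t := by funext s; ring
    rw [e, show 3 * x2 t ^ 2 * x3 t = (x3 t * x2 t + x2 t * x3 t) * x2 t + x2 t * x2 t * x3 t by ring]
    exact h
  have hsq3 : ∀ t, HasDerivAt (fun t => x3 t ^ 2) (2 * x3 t * x4 t) t := by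
    intro t
    have h := (hx3t t).mul (hx3t t)
    have e : (fun t => x3 t ^ 2) = fun t => x3 t * x3 t := by funext s; ring
    rw [e, show 2 * x3 t * x4 t = x4 t * x3 t + x3 t * x4 t by ring]; exact h
  have hat : ∀ t, HasDerivAt a 0 t := by
    intro t
    have H : HasDerivAt (fun t => 1/2 * (x4 t - 6 * x2 t ^ 2 - 4 * z4 t))
        ((1 : ℂ)/2 * (4 * (3 * x2 t * x3 t + z5 t) - 6 * (2 * x2 t * x3 t) - 4 * z5 t)) t :=
      (((hx4t t).sub ((hsq t).const_mul (6 : ℂ))).sub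
        ((hz4t t).const_mul (4 : ℂ))).const_mul ((1 : ℂ)/2)
    rw [ha]
    convert H using 1
    ring
  have hbt : ∀ t, HasDerivAt b 0 t := by
    intro t
    have Hp : HasDerivAt (fun t => 2 * x2 t * (x4 t + 4 * z4 t))
        (2 * x3 t * (x4 t + 4 * z4 t)
          + 2 * x2 t * (4 * (3 * x2 t * x3 t + z5 t) + 4 * z5 t)) t :=
      ((hx2t t).const_mul (2 : ℂ)).mul ((hx4t t).add ((hz4t t).const_mul (4 : ℂ)))
    have H : HasDerivAt (fun t => -(1/4) * (2 * x2 t * (x4 t + 4 * z4 t)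
          - 8 * x2 t ^ 3 - x3 t ^ 2 - 2 * z6 t))
        (-(1/4 : ℂ) * (2 * x3 t * (x4 t + 4 * z4 t)
          + 2 * x2 t * (4 * (3 * x2 t * x3 t + z5 t) + 4 * z5 t)
          - 8 * (3 * x2 t ^ 2 * x3 t) - 2 * x3 t * x4 t
          - 2 * (4 * (2 * x2 t * z5 t + x3 t * z4 t)))) t :=
      (((Hp.sub ((hcube t).const_mul (8 : ℂ))).sub (hsq3 t)).sub
        ((hz6t t).const_mul (2 : ℂ))).const_mul (-(1/4 : ℂ))
    rw [hb]
    convert H using 1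
    ring
  have hda : Differentiable ℝ a := fun t => (hat t).differentiableAt
  have hdb : Differentiable ℝ b := fun t => (hbt t).differentiableAt
  refine ⟨fun s t => is_const_of_deriv_eq_zero hda (fun t => (hat t).deriv) s t,
    fun s t => is_const_of_deriv_eq_zero hdb (fun t => (hbt t).deriv) s t, ?_⟩
  have dU : deriv U = fun t => 2 * x3 t := by
    funext t
    rw [hU]
    exact (((hx2t t).const_mul (2 : ℂ))).deriv
  have dU2 : deriv (fun t => 2 * x3 t) = fun t => 2 * x4 t := by
    funext t
    exact (((hx3t t).const_mul (2 : ℂ))).deriv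
  have dU3 : deriv (fun t => 2 * x4 t) = fun t => 2 * (4 * (3 * (x2 t * x3 t) + z5 t)) := by
    funext t
    rw [(((hx4t t).const_mul (2 : ℂ))).deriv]
    ring
  have dU4 : ∀ t, deriv (fun t => 2 * (4 * (3 * (x2 t * x3 t) + z5 t))) t
      = 2 * (4 * (3 * (x3 t * x3 t + x2 t * x4 t) + z6 t)) := by
    intro t
    have H := (((((hx2t t).mul (hx3t t)).const_mul (3 : ℂ)).add
      (hz5t t)).const_mul (4 : ℂ)).const_mul (2 : ℂ)
    exact H.deriv
  intro t
  have e4 : iteratedDeriv 4 U t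
      = 2 * (4 * (3 * (x3 t * x3 t + x2 t * x4 t) + z6 t)) := by
    rw [show (4 : ℕ) = 3 + 1 from rfl, iteratedDeriv_succ, iteratedDeriv_succ,
      iteratedDeriv_succ, iteratedDeriv_one, dU, dU2, dU3]
    exact dU4 t
  have e2 : iteratedDeriv 2 U t = 2 * x4 t := by
    rw [show (2 : ℕ) = 1 + 1 from rfl, iteratedDeriv_succ, iteratedDeriv_one, dU, dU2]
  rw [e4, e2, dU]
  simp only [ha, hb, hU]
  ring
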